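/- Let L ∈ (0,∞), p ∈ [1,∞), α ∈ (p,∞). Then for every measurable f, with c = (α/(α−p))^{1/p} L^{1/p − 1/α}: the quantity ‖f‖ = (∫₀ᴸ ((1/t)∫₀ᵗ f*(s)^α ds)^{p/α} dt)^{1/p} satisfies 2^{−1/α}(1 − 2^{(p−α)/α})^{1/p} · c · ‖f‖_{L^α} ≤ ‖f‖ ≤ c · ‖f‖_{L^α}, where ‖f‖_{L^α} = (∫₀ᴸ f*(s)^α ds)^{1/α}. In particular (L^p)^⟨α⟩ = L^α with equivalent norms. -/

import Mathlib

open MeasureTheory ENNReal Set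
open Filter Topology

/-- The decreasing rearrangement of `f` with respect to `μ`. -/
noncomputable def rearr {X : Type*} [MeasurableSpace X] (μ : Measure X) (f : X → ℝ) (t : ℝ) : ℝ :=
  sInf {l : ℝ | 0 ≤ l ∧ μ {x | l < |f x|} ≤ ENNReal.ofReal t}

/-- The maximal (average) decreasing rearrangement `f**`. -/
noncomputable def maxRearr {X : Type*} [MeasurableSpace X] (μ : Measure X) (f : X → ℝ) (t : ℝ) : ℝ :=
  (1 / t) * ∫ s in Set.Ioc (0:ℝ) t, rearr μ f s

lemma rearr_set_nonempty {X : Type*} [MeasurableSpace X] (μ : Measure X)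
    [IsFiniteMeasure μ] (f : X → ℝ) (hf : Measurable f) {t : ℝ} (ht : 0 < t) :
    {l : ℝ | 0 ≤ l ∧ μ {x | l < |f x|} ≤ ENNReal.ofReal t}.Nonempty := by
  have hmeas : ∀ c : ℝ, MeasurableSet {x | c < |f x|} := fun c =>
    measurableSet_lt measurable_const hf.abs
  have h0 : Tendsto (fun n : ℕ => μ {x | (n : ℝ) < |f x|}) atTop
      (𝓝 (μ (⋂ n : ℕ, {x | (n : ℝ) < |f x|}))) :=
    tendsto_measure_iInter_atTop (fun n => (hmeas _).nullMeasurableSet)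
      (fun n m hnm x hx => show (n:ℝ) < |f x| from lt_of_le_of_lt (Nat.cast_le.mpr hnm) hx)
      ⟨0, measure_ne_top μ _⟩
  have hempty : (⋂ n : ℕ, {x | (n : ℝ) < |f x|}) = ∅ := by
    ext x
    simp only [Set.mem_iInter, Set.mem_setOf_eq, Set.mem_empty_iff_false, iff_false,
      not_forall, not_lt]
    obtain ⟨n, hn⟩ := exists_nat_gt |f x|
    exact ⟨n, hn.le⟩
  rw [hempty, measure_empty] at h0
  have hev := h0.eventually_lt_const (ENNReal.ofReal_pos.mpr ht)
  obtain ⟨n, hn⟩ := hev.exists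
  exact ⟨(n : ℝ), Nat.cast_nonneg n, hn.le⟩

lemma rearr_anti {X : Type*} [MeasurableSpace X] (μ : Measure X) [IsFiniteMeasure μ]
    (f : X → ℝ) (hf : Measurable f) {s t : ℝ} (hs : 0 < s) (hst : s ≤ t) :
    rearr μ f t ≤ rearr μ f s := by
  apply csInf_le_csInf
  · exact ⟨0, fun l hl => hl.1⟩
  · exact rearr_set_nonempty μ f hf hs
  · exact fun l hl => ⟨hl.1, hl.2.trans (ENNReal.ofReal_le_ofReal hst)⟩

lemma lint_rpow_neg {r a b : ℝ} (hr1 : r < 1) (ha : 0 ≤ a) (hab : a ≤ b) :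
    ∫⁻ t in Set.Ioc a b, ENNReal.ofReal t ^ (-r) =
      ENNReal.ofReal ((b ^ (1 - r) - a ^ (1 - r)) / (1 - r)) := by
  rw [setLIntegral_congr_fun measurableSet_Ioc
      (fun t (ht : t ∈ Set.Ioc a b) =>
        (ENNReal.ofReal_rpow_of_pos (ha.trans_lt ht.1) : _))]
  have hint : IntegrableOn (fun t : ℝ => t ^ (-r)) (Set.Ioc a b) :=
    (intervalIntegrable_iff_integrableOn_Ioc_of_le hab).mp
      (intervalIntegral.intervalIntegrable_rpow' (by linarith))
  rw [← ofReal_integral_eq_lintegral_ofReal hint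
      ((ae_restrict_iff' measurableSet_Ioc).mpr (ae_of_all _ fun t ht =>
        Real.rpow_nonneg (ha.trans ht.1.le) _))]
  congr 1
  rw [← intervalIntegral.integral_of_le hab, integral_rpow (Or.inl (by linarith))]
  ring_nf

theorem stmt18 {X : Type*} [MeasurableSpace X] (μ : Measure X) [NullSingletonClass μ]
    (L : ℝ) (hL : 0 < L) (hμ : μ Set.univ = ENNReal.ofReal L)
    (p α : ℝ) (hp : 1 ≤ p) (hα : p < α) (f : X → ℝ) (hf : Measurable f) :
    ENNReal.ofReal (2 ^ (-(1/α)) * (1 - 2 ^ ((p - α)/α)) ^ (1/p)) *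
        (ENNReal.ofReal ((α / (α - p)) ^ (1/p) * L ^ (1/p - 1/α)) *
          (∫⁻ s in Set.Ioc (0:ℝ) L, ENNReal.ofReal (rearr μ f s) ^ α) ^ (1/α)) ≤
      (∫⁻ t in Set.Ioc (0:ℝ) L,
        ((1 / ENNReal.ofReal t) *
          ∫⁻ s in Set.Ioc (0:ℝ) t, ENNReal.ofReal (rearr μ f s) ^ α) ^ (p/α)) ^ (1/p) ∧
    (∫⁻ t in Set.Ioc (0:ℝ) L,
        ((1 / ENNReal.ofReal t) *
          ∫⁻ s in Set.Ioc (0:ℝ) t, ENNReal.ofReal (rearr μ f s) ^ α) ^ (p/α)) ^ (1/p) ≤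
      ENNReal.ofReal ((α / (α - p)) ^ (1/p) * L ^ (1/p - 1/α)) *
        (∫⁻ s in Set.Ioc (0:ℝ) L, ENNReal.ofReal (rearr μ f s) ^ α) ^ (1/α) := by
  have hfin : IsFiniteMeasure μ := ⟨by rw [hμ]; exact ENNReal.ofReal_lt_top⟩
  have hp0 : 0 < p := lt_of_lt_of_le one_pos hp
  have hα0 : 0 < α := hp0.trans hα
  have hαp : 0 < α - p := sub_pos.mpr hα
  set r : ℝ := p / α with hr
  have hr0 : 0 < r := div_pos hp0 hα0
  have hr1 : r < 1 := (div_lt_one hα0).mpr hα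
  have h1r : 1 - r = (α - p) / α := by rw [hr]; field_simp
  have hrp : r * (1 / p) = 1 / α := by rw [hr]; field_simp
  have h1rp : (1 - r) * (1 / p) = 1 / p - 1 / α := by rw [h1r]; field_simp
  set g : ℝ → ℝ≥0∞ := fun s => ENNReal.ofReal (rearr μ f s) ^ α with hg
  set I : ℝ≥0∞ := ∫⁻ s in Set.Ioc (0:ℝ) L, g s with hI
  have hganti : ∀ {s t : ℝ}, 0 < s → s ≤ t → g t ≤ g s := fun {s t} hs hst =>
    ENNReal.rpow_le_rpow (ENNReal.ofReal_le_ofReal (rearr_anti μ f hf hs hst)) hα0.le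
  have hpoint : ∀ t : ℝ, ∀ C : ℝ≥0∞,
      ((1 / ENNReal.ofReal t) * C) ^ r = ENNReal.ofReal t ^ (-r) * C ^ r := by
    intro t C
    rw [ENNReal.mul_rpow_of_nonneg _ _ hr0.le, one_div, ENNReal.inv_rpow, ← ENNReal.rpow_neg]
  have hmeasr : AEMeasurable (fun t : ℝ => ENNReal.ofReal t ^ (-r))
      (volume.restrict (Set.Ioc (0:ℝ) L)) := by
    fun_prop
  have hmeasr2 : AEMeasurable (fun t : ℝ => ENNReal.ofReal t ^ (-r))
      (volume.restrict (Set.Ioc (L/2) L)) := by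
    fun_prop
  -- upper bound
  have hupper : (∫⁻ t in Set.Ioc (0:ℝ) L,
      ((1 / ENNReal.ofReal t) * ∫⁻ s in Set.Ioc (0:ℝ) t, g s) ^ r)
      ≤ ENNReal.ofReal (α / (α - p) * L ^ (1 - r)) * I ^ r := by
    calc ∫⁻ t in Set.Ioc (0:ℝ) L, ((1 / ENNReal.ofReal t) * ∫⁻ s in Set.Ioc (0:ℝ) t, g s) ^ r
        ≤ ∫⁻ t in Set.Ioc (0:ℝ) L, ENNReal.ofReal t ^ (-r) * I ^ r := by
          refine lintegral_mono_ae ((ae_restrict_iff' measurableSet_Ioc).mpr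
            (ae_of_all _ fun t ht => ?_))
          rw [hpoint]
          gcongr
          exact lintegral_mono_set (Set.Ioc_subset_Ioc_right ht.2)
      _ = (∫⁻ t in Set.Ioc (0:ℝ) L, ENNReal.ofReal t ^ (-r)) * I ^ r :=
          lintegral_mul_const'' _ hmeasr
      _ = ENNReal.ofReal (α / (α - p) * L ^ (1 - r)) * I ^ r := by
          rw [lint_rpow_neg hr1 le_rfl hL.le, Real.zero_rpow (by linarith : (1:ℝ) - r ≠ 0)]
          congr 2
          rw [sub_zero, h1r, div_div_eq_mul_div]
          ring
  -- the key rpow identity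
  have hkey : ∀ J : ℝ≥0∞, (ENNReal.ofReal (α / (α - p) * L ^ (1 - r)) * J ^ r) ^ (1/p)
      = ENNReal.ofReal ((α / (α - p)) ^ (1/p) * L ^ (1/p - 1/α)) * J ^ (1/α) := by
    intro J
    rw [ENNReal.mul_rpow_of_nonneg _ _ (by positivity : (0:ℝ) ≤ 1/p),
      ← ENNReal.rpow_mul, hrp,
      ENNReal.ofReal_rpow_of_pos (by positivity),
      Real.mul_rpow (by positivity) (Real.rpow_nonneg hL.le _),
      ← Real.rpow_mul hL.le, h1rp]
  -- I ≤ 2 * ∫ on (0, L/2]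
  have hLhalf : 0 < L / 2 := half_pos hL
  have hsplit : I = (∫⁻ s in Set.Ioc (0:ℝ) (L/2), g s) + ∫⁻ s in Set.Ioc (L/2) L, g s := by
    rw [hI, ← Set.Ioc_union_Ioc_eq_Ioc hLhalf.le (half_le_self hL.le),
      lintegral_union measurableSet_Ioc (Set.Ioc_disjoint_Ioc_of_le le_rfl)]
  have hhalf : 2⁻¹ * I ≤ ∫⁻ s in Set.Ioc (0:ℝ) (L/2), g s := by
    have h2 : ∫⁻ s in Set.Ioc (L/2) L, g s ≤ ∫⁻ s in Set.Ioc (0:ℝ) (L/2), g s := by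
      calc ∫⁻ s in Set.Ioc (L/2) L, g s
          ≤ ∫⁻ _s in Set.Ioc (L/2) L, g (L/2) :=
            lintegral_mono_ae ((ae_restrict_iff' measurableSet_Ioc).mpr
              (ae_of_all _ fun s hs => hganti hLhalf hs.1.le))
        _ = g (L/2) * ENNReal.ofReal (L - L/2) := by
            rw [setLIntegral_const, Real.volume_Ioc]
        _ = g (L/2) * ENNReal.ofReal (L/2 - 0) := by rw [show L - L/2 = L/2 - 0 by ring]
        _ = ∫⁻ _s in Set.Ioc (0:ℝ) (L/2), g (L/2) := by
            rw [setLIntegral_const, Real.volume_Ioc]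
        _ ≤ ∫⁻ s in Set.Ioc (0:ℝ) (L/2), g s :=
            lintegral_mono_ae ((ae_restrict_iff' measurableSet_Ioc).mpr
              (ae_of_all _ fun s hs => hganti hs.1 hs.2))
    calc 2⁻¹ * I ≤ 2⁻¹ * (2 * ∫⁻ s in Set.Ioc (0:ℝ) (L/2), g s) := by
          refine mul_le_mul_right ?_ _
          rw [hsplit, two_mul]
          exact add_le_add_right h2 _
      _ = ∫⁻ s in Set.Ioc (0:ℝ) (L/2), g s := by
          rw [← mul_assoc, ENNReal.inv_mul_cancel two_ne_zero ENNReal.ofNat_ne_top, one_mul]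
  -- lower bound on the integral
  have hlower : ENNReal.ofReal (α / (α - p) * L ^ (1 - r) * (1 - 2 ^ ((p - α)/α))) * (2⁻¹ * I) ^ r
      ≤ ∫⁻ t in Set.Ioc (0:ℝ) L,
        ((1 / ENNReal.ofReal t) * ∫⁻ s in Set.Ioc (0:ℝ) t, g s) ^ r := by
    have hDval : (L ^ (1 - r) - (L/2) ^ (1 - r)) / (1 - r)
        = α / (α - p) * L ^ (1 - r) * (1 - 2 ^ ((p - α)/α)) := by
      have hhalfpow : (L/2) ^ (1 - r) = L ^ (1 - r) * 2 ^ ((p - α)/α) := by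
        rw [Real.div_rpow hL.le (by norm_num : (0:ℝ) ≤ 2),
          show (p - α)/α = -(1 - r) by rw [h1r]; ring, Real.rpow_neg (by norm_num : (0:ℝ) ≤ 2)]
        ring
      rw [hhalfpow, h1r, div_div_eq_mul_div]
      ring
    calc ENNReal.ofReal (α / (α - p) * L ^ (1 - r) * (1 - 2 ^ ((p - α)/α))) * (2⁻¹ * I) ^ r
        = (∫⁻ t in Set.Ioc (L/2) L, ENNReal.ofReal t ^ (-r)) * (2⁻¹ * I) ^ r := by
          rw [lint_rpow_neg hr1 hLhalf.le (half_le_self hL.le), hDval]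
      _ = ∫⁻ t in Set.Ioc (L/2) L, ENNReal.ofReal t ^ (-r) * (2⁻¹ * I) ^ r :=
          (lintegral_mul_const'' _ hmeasr2).symm
      _ ≤ ∫⁻ t in Set.Ioc (L/2) L,
            ((1 / ENNReal.ofReal t) * ∫⁻ s in Set.Ioc (0:ℝ) t, g s) ^ r := by
          refine lintegral_mono_ae ((ae_restrict_iff' measurableSet_Ioc).mpr
            (ae_of_all _ fun t ht => ?_))
          rw [hpoint]
          gcongr
          exact hhalf.trans (lintegral_mono_set (Set.Ioc_subset_Ioc_right ht.1.le))
      _ ≤ ∫⁻ t in Set.Ioc (0:ℝ) L,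
            ((1 / ENNReal.ofReal t) * ∫⁻ s in Set.Ioc (0:ℝ) t, g s) ^ r :=
          lintegral_mono_set (Set.Ioc_subset_Ioc_left hLhalf.le)
  constructor
  · -- lower bound of the theorem
    have h2lt1 : (2:ℝ) ^ ((p - α)/α) < 1 :=
      Real.rpow_lt_one_of_one_lt_of_neg one_lt_two
        (div_neg_of_neg_of_pos (sub_neg.mpr hα) hα0)
    have hDpos : (0:ℝ) < α / (α - p) * L ^ (1 - r) * (1 - 2 ^ ((p - α)/α)) :=
      mul_pos (mul_pos (div_pos hα0 hαp) (Real.rpow_pos_of_pos hL _)) (by linarith [h2lt1])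
    have hstep := ENNReal.rpow_le_rpow hlower (by positivity : (0:ℝ) ≤ 1/p)
    refine le_trans ?_ hstep
    -- compute LHS of hstep after rpow
    have hsplit2 : (ENNReal.ofReal (α / (α - p) * L ^ (1 - r) * (1 - 2 ^ ((p - α)/α)))
          * (2⁻¹ * I) ^ r) ^ (1/p)
        = ENNReal.ofReal ((α / (α - p) * L ^ (1 - r) * (1 - 2 ^ ((p - α)/α))) ^ (1/p))
          * (ENNReal.ofReal (2 ^ (-(1/α))) * I ^ (1/α)) := by
      rw [ENNReal.mul_rpow_of_nonneg _ _ (by positivity : (0:ℝ) ≤ 1/p),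
        ← ENNReal.rpow_mul, hrp,
        ENNReal.mul_rpow_of_nonneg _ _ (by positivity : (0:ℝ) ≤ 1/α),
        ENNReal.ofReal_rpow_of_pos hDpos,
        show ((2:ℝ≥0∞)⁻¹) = ENNReal.ofReal (2⁻¹) by
          rw [ENNReal.ofReal_inv_of_pos (by norm_num)]; norm_num,
        ENNReal.ofReal_rpow_of_pos (by norm_num),
        show ((2:ℝ)⁻¹) ^ (1/α) = 2 ^ (-(1/α)) by
          rw [Real.rpow_neg (by norm_num : (0:ℝ) ≤ 2), ← Real.inv_rpow (by norm_num : (0:ℝ) ≤ 2)]]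
    rw [hsplit2, ← mul_assoc, ← mul_assoc,
      ← ENNReal.ofReal_mul (mul_nonneg (Real.rpow_nonneg (by norm_num : (0:ℝ) ≤ 2) _)
        (Real.rpow_nonneg (by linarith [h2lt1]) _)),
      ← ENNReal.ofReal_mul (Real.rpow_nonneg hDpos.le _)]
    refine mul_le_mul_left (ENNReal.ofReal_le_ofReal (le_of_eq ?_)) _
    rw [Real.mul_rpow (mul_nonneg (div_pos hα0 hαp).le (Real.rpow_nonneg hL.le _))
        (by linarith [h2lt1]),
      Real.mul_rpow (div_pos hα0 hαp).le (Real.rpow_nonneg hL.le _),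
      ← Real.rpow_mul hL.le, h1rp]
    ring
  · -- upper bound of the theorem
    calc (∫⁻ t in Set.Ioc (0:ℝ) L,
          ((1 / ENNReal.ofReal t) * ∫⁻ s in Set.Ioc (0:ℝ) t, g s) ^ r) ^ (1/p)
        ≤ (ENNReal.ofReal (α / (α - p) * L ^ (1 - r)) * I ^ r) ^ (1/p) :=
          ENNReal.rpow_le_rpow hupper (by positivity)
      _ = ENNReal.ofReal ((α / (α - p)) ^ (1/p) * L ^ (1/p - 1/α)) * I ^ (1/α) := hkey I
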